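/- arXiv:1406.1083 — 2 statements merged into one kernel-verified Lean document; each statement's English description precedes it below -/
import Mathlib

section
/- Let x_k be a zero of the Jacobi polynomial P_n^{(α,β)} with x_k ∈ (−1,1), and define M_{k,r} = (P_n^{(α,β)})^{(r+1)}(x_k) / ((r+1)! · (P_n^{(α,β)})'(x_k)). Then M_{k,0} = 1, M_{k,1} = (α − β + (α+β+2)x_k)/(2(1−x_k²)), and for r ≥ 1, M_{k,r+1} = [((α+β+2(r+1))x_k + α − β)/((1−x_k²)(r+2))] M_{k,r} + [(r(α+β+r+1) − n(n+α+β+1))/((1−x_k²)(r+2)(r+1))] M_{k,r−1}. -/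
open Polynomial

set_option maxHeartbeats 1000000 in
/-- Let `P = P_n^{(α,β)}` (characterized by the Jacobi differential equation),
`x_k ∈ (−1,1)` a zero of `P` with `P'(x_k) ≠ 0`, and
`M_r = P^{(r+1)}(x_k)/((r+1)! P'(x_k))`. Then `M_0 = 1`,
`M_1 = (α−β+(α+β+2)x_k)/(2(1−x_k²))`, and the stated three-term recursion holds for `r ≥ 1`. -/
theorem stmt_6 (n : ℕ) (α β : ℝ) (hα : -1 < α) (hβ : -1 < β) (P : Polynomial ℝ)
    (hP : (1 - X ^ 2) * derivative (derivative P) +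
        (C (β - α) - C (α + β + 2) * X) * derivative P +
        C ((n : ℝ) * ((n : ℝ) + α + β + 1)) * P = 0)
    (xk : ℝ) (hroot : P.eval xk = 0) (hmem : xk ∈ Set.Ioo (-1 : ℝ) 1)
    (hP' : (derivative P).eval xk ≠ 0)
    (M : ℕ → ℝ)
    (hM : ∀ r, M r = (derivative^[r + 1] P).eval xk /
      ((Nat.factorial (r + 1) : ℝ) * (derivative P).eval xk)) :
    M 0 = 1 ∧
      M 1 = (α - β + (α + β + 2) * xk) / (2 * (1 - xk ^ 2)) ∧
      ∀ r : ℕ, 1 ≤ r →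
        M (r + 1) =
          ((α + β + 2 * ((r : ℝ) + 1)) * xk + α - β) / ((1 - xk ^ 2) * ((r : ℝ) + 2)) * M r +
            ((r : ℝ) * (α + β + (r : ℝ) + 1) - (n : ℝ) * ((n : ℝ) + α + β + 1)) /
              ((1 - xk ^ 2) * ((r : ℝ) + 2) * ((r : ℝ) + 1)) * M (r - 1) := by
  have hx1 : (1 : ℝ) - xk ^ 2 ≠ 0 := by
    obtain ⟨h1, h2⟩ := hmem
    nlinarith
  -- key polynomial identity: r-th derivative of the ODE
  have key : ∀ r : ℕ,
      (1 - X ^ 2) * derivative (derivative (derivative^[r] P)) +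
        (C (β - α) - C (α + β + 2 + 2 * r) * X) * derivative (derivative^[r] P) +
        C ((n : ℝ) * ((n : ℝ) + α + β + 1) - r * (r + α + β + 1)) * derivative^[r] P = 0 := by
    intro r
    induction r with
    | zero => simpa using hP
    | succ m ih =>
      have h := congrArg derivative ih
      simp only [Function.iterate_succ_apply'] at *
      simp only [derivative_add, derivative_mul, derivative_sub, derivative_one,
        derivative_X, derivative_C, derivative_X_pow, derivative_zero] at h
      push_cast at h ⊢
      simp only [C_add, C_sub, C_mul, C_1, map_ofNat] at h ⊢
      linear_combination h
  -- evaluated identity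
  have hit1 : ∀ j : ℕ, derivative^[j + 1] P = derivative (derivative^[j] P) :=
    fun j => Function.iterate_succ_apply' _ _ _
  have hit2 : ∀ j : ℕ, derivative^[j + 2] P = derivative (derivative (derivative^[j] P)) := by
    intro j
    rw [show j + 2 = (j + 1) + 1 from rfl, hit1 (j + 1), hit1 j]
  set e : ℕ → ℝ := fun j => (derivative^[j] P).eval xk with he
  have heval : ∀ r : ℕ,
      (1 - xk ^ 2) * e (r + 2) + ((β - α) - (α + β + 2 + 2 * r) * xk) * e (r + 1) +
        ((n : ℝ) * ((n : ℝ) + α + β + 1) - r * (r + α + β + 1)) * e r = 0 := by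
    intro r
    have h := congrArg (Polynomial.eval xk) (key r)
    simp only [eval_add, eval_mul, eval_sub, eval_one, eval_X, eval_pow, eval_C,
      eval_zero] at h
    simp only [he, hit2 r, hit1 r, eval_zero]
    linear_combination h
  have hM0 : M 0 = 1 := by
    rw [hM 0]
    simp [Nat.factorial]
    exact hP'
  have he0 : e 0 = 0 := by simpa [he] using hroot
  have he1 : e 1 ≠ 0 := by simpa [he, hit1 0] using hP'
  have hMe : ∀ r : ℕ, M r = e (r + 1) / ((Nat.factorial (r + 1) : ℝ) * e 1) := by
    intro r
    rw [hM r]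
    simp [he, hit1 0]
  have hM1 : M 1 = (α - β + (α + β + 2) * xk) / (2 * (1 - xk ^ 2)) := by
    have h0 := heval 0
    rw [he0] at h0
    rw [hMe 1]
    have hfac : ((Nat.factorial 2 : ℕ) : ℝ) = 2 := by norm_num [Nat.factorial]
    rw [hfac]
    push_cast at h0
    field_simp
    nlinarith [h0, sq_nonneg (e 1), sq_nonneg xk]
  refine ⟨hM0, hM1, ?_⟩
  intro r hr
  obtain ⟨m, rfl⟩ : ∃ m, r = m + 1 := ⟨r - 1, by omega⟩
  have hrec := heval (m + 1)
  rw [hMe (m + 1 + 1), hMe (m + 1), show m + 1 - 1 = m from rfl, hMe m]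
  have f1 : ((Nat.factorial (m + 1 + 1 + 1) : ℕ) : ℝ)
      = ((m : ℝ) + 3) * ((m : ℝ) + 2) * ((m : ℝ) + 1) * (Nat.factorial m : ℝ) := by
    rw [Nat.factorial_succ, Nat.factorial_succ, Nat.factorial_succ]
    push_cast; ring
  have f2 : ((Nat.factorial (m + 1 + 1) : ℕ) : ℝ)
      = ((m : ℝ) + 2) * ((m : ℝ) + 1) * (Nat.factorial m : ℝ) := by
    rw [Nat.factorial_succ, Nat.factorial_succ]
    push_cast; ring
  have f3 : ((Nat.factorial (m + 1) : ℕ) : ℝ) = ((m : ℝ) + 1) * (Nat.factorial m : ℝ) := by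
    rw [Nat.factorial_succ]; push_cast; ring
  have hfm : (Nat.factorial m : ℝ) ≠ 0 := by
    exact_mod_cast Nat.factorial_ne_zero m
  rw [f1, f2, f3]
  have g1 : ((m : ℝ) + 1) ≠ 0 := by positivity
  have g2 : ((m : ℝ) + 2) ≠ 0 := by positivity
  have g3 : ((m : ℝ) + 3) ≠ 0 := by positivity
  rw [show m + 1 + 2 = m + 3 from rfl, show m + 1 + 1 = m + 2 from rfl] at hrec
  push_cast at hrec ⊢
  have hc : e (m + 3) = (((α + β + 2 + 2 * ((m : ℝ) + 1)) * xk - (β - α)) * e (m + 2)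
      + (((m : ℝ) + 1) * (((m : ℝ) + 1) + α + β + 1) - (n : ℝ) * ((n : ℝ) + α + β + 1))
        * e (m + 1)) / (1 - xk ^ 2) := by
    rw [eq_div_iff hx1]
    linear_combination hrec
  rw [show m + 1 + 1 + 1 = m + 3 from rfl] at hc ⊢
  rw [hc]
  field_simp
  ring
end

section
/- With the notation of m-fold barycentric Hermite weights at distinct nodes, for m = 3: w_{k,1} = −(3ω''(x_k)/(2ω'(x_k)))·w_{k,0} and w_{k,2} = (−ω^{(3)}(x_k)/(2ω'(x_k)) + (3/2)(ω''(x_k)/ω'(x_k))²)·w_{k,0}, where w_{k,0} = 1/(ω'(x_k))³. -/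
open Polynomial

/-- For `m = 3` and distinct nodes, with `w_{k,0} = 1/ω'(x_k)³`,
`b_j = [ℓ_k³]^{(j)}(x_k)/j!`, and the recursion `w_{k,j} = −Σ_{i=0}^{j-1} w_{k,i} b_{j-i}`:
`w_{k,1} = −(3ω''(x_k)/(2ω'(x_k)))·w_{k,0}` and
`w_{k,2} = (−ω'''(x_k)/(2ω'(x_k)) + (3/2)(ω''(x_k)/ω'(x_k))²)·w_{k,0}`. -/
theorem stmt_17 (n : ℕ) (x : Fin n → ℝ) (hx : Function.Injective x) (k : Fin n)
    (ω : Polynomial ℝ) (hω : ω = ∏ j, (X - C (x j)))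
    (ℓk : Polynomial ℝ)
    (hℓ : ℓk = C (((derivative ω).eval (x k))⁻¹) * ∏ j ∈ Finset.univ.erase k, (X - C (x j)))
    (b : ℕ → ℝ)
    (hb : ∀ j, b j = (derivative^[j] (ℓk ^ 3)).eval (x k) / (Nat.factorial j : ℝ))
    (w0 w1 w2 : ℝ)
    (hw0 : w0 = 1 / ((derivative ω).eval (x k)) ^ 3)
    (hw1 : w1 = -(w0 * b 1))
    (hw2 : w2 = -(w0 * b 2 + w1 * b 1)) :
    w1 = -(3 * (derivative^[2] ω).eval (x k) / (2 * (derivative ω).eval (x k))) * w0 ∧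
      w2 = (-((derivative^[3] ω).eval (x k) / (2 * (derivative ω).eval (x k))) +
        (3 / 2) * ((derivative^[2] ω).eval (x k) / (derivative ω).eval (x k)) ^ 2) * w0 := by
  set ψ : Polynomial ℝ := ∏ j ∈ Finset.univ.erase k, (X - C (x j)) with hψ
  have hωψ : ω = (X - C (x k)) * ψ := by
    rw [hω, hψ, ← Finset.mul_prod_erase _ _ (Finset.mem_univ k)]
  have d1 : derivative ω = ψ + (X - C (x k)) * derivative ψ := by
    rw [hωψ]; simp [derivative_mul]
  have d2 : derivative^[2] ω = 2 * derivative ψ + (X - C (x k)) * derivative^[2] ψ := by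
    show derivative (derivative^[1] ω) = _
    rw [Function.iterate_one, d1]
    simp [derivative_mul]; ring
  have d3 : derivative^[3] ω = 3 * derivative^[2] ψ + (X - C (x k)) * derivative^[3] ψ := by
    show derivative (derivative^[2] ω) = _
    rw [d2]
    simp [derivative_mul]; ring
  set P : ℝ := ψ.eval (x k) with hPdef
  set P1 : ℝ := (derivative ψ).eval (x k) with hP1def
  set P2 : ℝ := (derivative^[2] ψ).eval (x k) with hP2def
  have hP : P ≠ 0 := by
    rw [hPdef, hψ, eval_prod]
    refine Finset.prod_ne_zero_iff.mpr fun j hj => ?_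
    simp only [eval_sub, eval_X, eval_C]
    exact sub_ne_zero.mpr fun h => (Finset.mem_erase.mp hj).1 (hx h).symm
  have e1 : (derivative ω).eval (x k) = P := by rw [d1]; simp; rfl
  have e2 : (derivative^[2] ω).eval (x k) = 2 * P1 := by rw [d2]; simp; rfl
  have hP2' : (derivative (derivative ψ)).eval (x k) = P2 := rfl
  have e3 : (derivative^[3] ω).eval (x k) = 3 * P2 := by rw [d3]; simp [hP2']
  have hl3 : ℓk ^ 3 = C (P⁻¹ ^ 3) * ψ ^ 3 := by
    rw [hℓ, e1, mul_pow, ← C_pow]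
  have dl1 : derivative (ℓk ^ 3) = C (P⁻¹ ^ 3) * (C 3 * ψ ^ 2 * derivative ψ) := by
    rw [hl3]
    simp [derivative_mul, derivative_pow]
  have dl2 : derivative^[2] (ℓk ^ 3)
      = C (P⁻¹ ^ 3) * (C 6 * ψ * derivative ψ ^ 2 + C 3 * ψ ^ 2 * derivative (derivative ψ)) := by
    show derivative (derivative^[1] (ℓk ^ 3)) = _
    rw [Function.iterate_one, dl1]
    simp only [derivative_mul, derivative_pow, derivative_C, derivative_ofNat, zero_mul, mul_zero,
      zero_add, add_zero, map_ofNat, Nat.cast_ofNat]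
    norm_num
    exact Or.inl (by ring)
  have hb1 : b 1 = P⁻¹ ^ 3 * (3 * P ^ 2 * P1) := by
    rw [hb 1, Function.iterate_one, dl1]
    simp
    exact Or.inl rfl
  have hb2 : b 2 = P⁻¹ ^ 3 * (6 * P * P1 ^ 2 + 3 * P ^ 2 * P2) / 2 := by
    rw [hb 2, dl2]
    simp [Nat.factorial, hP2']
    exact Or.inl rfl
  constructor
  · rw [hw1, hw0, hb1, e1, e2]
    field_simp
  · rw [hw2, hw1, hw0, hb1, hb2, e1, e2, e3]
    field_simp
    ring
end
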